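/- Optimization lemma (three-group guessing): Let X, Y, Z be disjoint finite sets with |Z| ≥ 2, and maximize min{p_X + p_Y, p_Y + p_Z, p_Z + p_X, 2·p_Z} over nonnegative reals p_X, p_Y, p_Z subject to |X|·p_X + |Y|·p_Y + |Z|·p_Z = 1. The maximum value equals max{ 2/(|X|+|Y|+|Z|), 1/(|X|+|Z|), 1/(|Y|+|Z|) }. -/

import Mathlib

/-- Three-group guessing LP: maximize min{p_X+p_Y, p_Y+p_Z, p_Z+p_X, 2 p_Z}
subject to |X| p_X + |Y| p_Y + |Z| p_Z = 1, p's nonnegative.  The maximum equals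
max{2/(|X|+|Y|+|Z|), 1/(|X|+|Z|), 1/(|Y|+|Z|)}. -/
theorem three_group_guessing_lp {α : Type} [DecidableEq α]
    (X Y Z : Finset α)
    (hXY : Disjoint X Y) (hXZ : Disjoint X Z) (hYZ : Disjoint Y Z)
    (hX : X.Nonempty) (hY : Y.Nonempty) (hZ : 2 ≤ Z.card) :
    IsGreatest
      { m : ℝ | ∃ pX pY pZ : ℝ, 0 ≤ pX ∧ 0 ≤ pY ∧ 0 ≤ pZ ∧
          (X.card : ℝ) * pX + (Y.card : ℝ) * pY + (Z.card : ℝ) * pZ = 1 ∧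
          m = min (min (pX + pY) (pY + pZ)) (min (pZ + pX) (2 * pZ)) }
      (max (max (2 / ((X.card : ℝ) + Y.card + Z.card))
                (1 / ((X.card : ℝ) + Z.card)))
           (1 / ((Y.card : ℝ) + Z.card))) := by
  have hx : (1:ℝ) ≤ (X.card : ℝ) := by exact_mod_cast hX.card_pos
  have hy : (1:ℝ) ≤ (Y.card : ℝ) := by exact_mod_cast hY.card_pos
  have hz : (2:ℝ) ≤ (Z.card : ℝ) := by exact_mod_cast hZ
  set x : ℝ := (X.card : ℝ) with hxdef
  set y : ℝ := (Y.card : ℝ) with hydef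
  set z : ℝ := (Z.card : ℝ) with hzdef
  have hs : (0:ℝ) < x + y + z := by linarith
  have hxz : (0:ℝ) < x + z := by linarith
  have hyz : (0:ℝ) < y + z := by linarith
  constructor
  · -- membership: the max is achieved
    have hA : (2 / (x + y + z)) ∈ { m : ℝ | ∃ pX pY pZ : ℝ, 0 ≤ pX ∧ 0 ≤ pY ∧ 0 ≤ pZ ∧
          x * pX + y * pY + z * pZ = 1 ∧
          m = min (min (pX + pY) (pY + pZ)) (min (pZ + pX) (2 * pZ)) } := by
      refine ⟨1/(x+y+z), 1/(x+y+z), 1/(x+y+z), by positivity, by positivity, by positivity,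
        ?_, ?_⟩
      · field_simp
      · rw [show 1/(x+y+z) + 1/(x+y+z) = 2/(x+y+z) from by ring,
            show 2 * (1/(x+y+z)) = 2/(x+y+z) from by ring]
        simp
    have hB : (1 / (x + z)) ∈ { m : ℝ | ∃ pX pY pZ : ℝ, 0 ≤ pX ∧ 0 ≤ pY ∧ 0 ≤ pZ ∧
          x * pX + y * pY + z * pZ = 1 ∧
          m = min (min (pX + pY) (pY + pZ)) (min (pZ + pX) (2 * pZ)) } := by
      refine ⟨1/(x+z), 0, 1/(x+z), by positivity, le_refl 0, by positivity, ?_, ?_⟩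
      · field_simp
        ring
      · rw [add_zero, zero_add, min_self,
            show 1/(x+z) + 1/(x+z) = 2 * (1/(x+z)) from by ring, min_self]
        exact (min_eq_left (by linarith [one_div_nonneg.mpr hxz.le])).symm
    have hC : (1 / (y + z)) ∈ { m : ℝ | ∃ pX pY pZ : ℝ, 0 ≤ pX ∧ 0 ≤ pY ∧ 0 ≤ pZ ∧
          x * pX + y * pY + z * pZ = 1 ∧
          m = min (min (pX + pY) (pY + pZ)) (min (pZ + pX) (2 * pZ)) } := by
      refine ⟨0, 1/(y+z), 1/(y+z), le_refl 0, by positivity, by positivity, ?_, ?_⟩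
      · field_simp
        ring
      · rw [zero_add, add_zero,
            show 1/(y+z) + 1/(y+z) = 2 * (1/(y+z)) from by ring, min_self]
        exact (min_eq_left (by linarith [one_div_nonneg.mpr hyz.le])).symm
    rcases max_choice (max (2/(x+y+z)) (1/(x+z))) (1/(y+z)) with h | h <;> rw [h]
    · rcases max_choice (2/(x+y+z)) (1/(x+z)) with h2 | h2 <;> rw [h2]
      · exact hA
      · exact hB
    · exact hC
  · -- upper bound
    rintro m ⟨pX, pY, pZ, h0X, h0Y, h0Z, hsum, rfl⟩
    set M := min (min (pX + pY) (pY + pZ)) (min (pZ + pX) (2 * pZ)) with hM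
    have h1 : M ≤ pX + pY := le_trans (min_le_left _ _) (min_le_left _ _)
    have h2 : M ≤ pY + pZ := le_trans (min_le_left _ _) (min_le_right _ _)
    have h3 : M ≤ pZ + pX := le_trans (min_le_right _ _) (min_le_left _ _)
    have h4 : M ≤ 2 * pZ := le_trans (min_le_right _ _) (min_le_right _ _)
    rcases le_or_gt (x + z) y with hc1 | hc1
    · -- M ≤ 1/(x+z)
      refine le_trans ?_ ((le_max_right _ _).trans (le_max_left _ _))
      rw [le_div_iff₀ hxz]
      have t1 : x * M ≤ x * (pX + pY) := mul_le_mul_of_nonneg_left h1 (by linarith)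
      have t2 : z * M ≤ z * (pY + pZ) := mul_le_mul_of_nonneg_left h2 (by linarith)
      have t3 : 0 ≤ (y - (x + z)) * pY := mul_nonneg (by linarith) h0Y
      linarith
    · rcases le_or_gt (y + z) x with hc2 | hc2
      · -- M ≤ 1/(y+z)
        refine le_trans ?_ (le_max_right _ _)
        rw [le_div_iff₀ hyz]
        have t1 : y * M ≤ y * (pX + pY) := mul_le_mul_of_nonneg_left h1 (by linarith)
        have t2 : z * M ≤ z * (pZ + pX) := mul_le_mul_of_nonneg_left h3 (by linarith)
        have t3 : 0 ≤ (x - (y + z)) * pX := mul_nonneg (by linarith) h0X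
        linarith
      · -- M ≤ 2/(x+y+z)
        refine le_trans ?_ ((le_max_left _ _).trans (le_max_left _ _))
        rw [le_div_iff₀ hs]
        rcases le_or_gt (x + y) z with hc3 | hc3
        · have t1 : y * M ≤ y * (pY + pZ) := mul_le_mul_of_nonneg_left h2 (by linarith)
          have t2 : x * M ≤ x * (pZ + pX) := mul_le_mul_of_nonneg_left h3 (by linarith)
          have t3 : ((z - x - y)/2) * M ≤ ((z - x - y)/2) * (2 * pZ) :=
            mul_le_mul_of_nonneg_left h4 (by linarith)
          linarith
        · have t1 : ((x + y - z)/2) * M ≤ ((x + y - z)/2) * (pX + pY) :=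
            mul_le_mul_of_nonneg_left h1 (by linarith)
          have t2 : ((y + z - x)/2) * M ≤ ((y + z - x)/2) * (pY + pZ) :=
            mul_le_mul_of_nonneg_left h2 (by linarith)
          have t3 : ((x + z - y)/2) * M ≤ ((x + z - y)/2) * (pZ + pX) :=
            mul_le_mul_of_nonneg_left h3 (by linarith)
          linarith
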